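/- Let ρ_a > 0 (a = 1,2,3), R_a > 0, S_{ab} ≥ 0, and for each a let r_a ∈ [r̄_1, r̄_3] with 0 < r̄_1 ≤ r̄_3. Set m̄_a(k) = ρ_a k − r_a and consider the cubic f(k) = m̄_1 m̄_2 m̄_3 − Σ_a (∏_{b≠a} m̄_b) R_a v̂_a² − Σ_{a<b} m̄_c S_{ab} v̂_a² v̂_b², with v̂ a unit vector with all v̂_a ≠ 0. Suppose f has one real root s_1 and a complex-conjugate pair s_{2,3} = k_R ± i k_I with k_I ≠ 0. If ρ_a k_R − r̄_3 > 0 for all a, then the imaginary part of G(s_2) := 1 − Σ_a R_a v̂_a²/m̄_a(s_2) − Σ_{a<b} S_{ab} v̂_a² v̂_b²/(m̄_a(s_2) m̄_b(s_2)) is nonzero, contradicting f(s_2) = 0; hence all three roots of f are real. -/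
import Mathlib

set_option maxHeartbeats 2000000


/-- If the characteristic cubic `f` (with `ρ_a > 0`, `R_a > 0`,
`S_{ab} ≥ 0`, `r_a ∈ [r̄₁, r̄₃]`, `0 < r̄₁ ≤ r̄₃`, all `v̂_a ≠ 0`) had one real
root `s₁` and a genuinely complex conjugate pair `k_R ± i k_I` (`k_I ≠ 0`)
with `ρ_a k_R − r̄₃ > 0` for all `a`, then the imaginary part of `G` at the
complex root would be nonzero, contradicting `f = 0` there; hence this
situation is impossible (all three roots of `f` are real). -/
theorem stmt_6 (ρ1 ρ2 ρ3 r1 r2 r3 rb1 rb3 R1 R2 R3 S12 S13 S23 v1 v2 v3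
    s1 kR kI : ℝ)
    (hρ1 : 0 < ρ1) (hρ2 : 0 < ρ2) (hρ3 : 0 < ρ3)
    (hrb : 0 < rb1) (hrb13 : rb1 ≤ rb3)
    (hr1 : r1 ∈ Set.Icc rb1 rb3) (hr2 : r2 ∈ Set.Icc rb1 rb3)
    (hr3 : r3 ∈ Set.Icc rb1 rb3)
    (hR1 : 0 < R1) (hR2 : 0 < R2) (hR3 : 0 < R3)
    (hS12 : 0 ≤ S12) (hS13 : 0 ≤ S13) (hS23 : 0 ≤ S23)
    (hv : v1 ^ 2 + v2 ^ 2 + v3 ^ 2 = 1)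
    (hv1 : v1 ≠ 0) (hv2 : v2 ≠ 0) (hv3 : v3 ≠ 0)
    (m1 m2 m3 f : ℂ → ℂ)
    (hm1 : ∀ z, m1 z = (ρ1 : ℂ) * z - (r1 : ℂ))
    (hm2 : ∀ z, m2 z = (ρ2 : ℂ) * z - (r2 : ℂ))
    (hm3 : ∀ z, m3 z = (ρ3 : ℂ) * z - (r3 : ℂ))
    (hfdef : ∀ z, f z =
      m1 z * m2 z * m3 z
        - (m2 z * m3 z * (R1 : ℂ) * (v1 : ℂ) ^ 2
            + m1 z * m3 z * (R2 : ℂ) * (v2 : ℂ) ^ 2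
            + m1 z * m2 z * (R3 : ℂ) * (v3 : ℂ) ^ 2)
        - (m3 z * (S12 : ℂ) * (v1 : ℂ) ^ 2 * (v2 : ℂ) ^ 2
            + m2 z * (S13 : ℂ) * (v1 : ℂ) ^ 2 * (v3 : ℂ) ^ 2
            + m1 z * (S23 : ℂ) * (v2 : ℂ) ^ 2 * (v3 : ℂ) ^ 2))
    -- `f` has the real root `s₁` and the complex-conjugate pair `k_R ± i k_I`
    (hfact : ∀ z : ℂ, f z =
      ((ρ1 * ρ2 * ρ3 : ℝ) : ℂ) * (z - (s1 : ℂ)) *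
        (z - ((kR : ℂ) + (kI : ℂ) * Complex.I)) *
        (z - ((kR : ℂ) - (kI : ℂ) * Complex.I)))
    (hkI : kI ≠ 0)
    (hkR : ρ1 * kR - rb3 > 0 ∧ ρ2 * kR - rb3 > 0 ∧ ρ3 * kR - rb3 > 0) :
    False := by
  obtain ⟨hkR1, hkR2, hkR3⟩ := hkR
  have hA1 : 0 < ρ1 * kR - r1 := by linarith [hr1.2]
  have hA2 : 0 < ρ2 * kR - r2 := by linarith [hr2.2]
  have hA3 : 0 < ρ3 * kR - r3 := by linarith [hr3.2]
  set s₂ : ℂ := (kR : ℂ) + (kI : ℂ) * Complex.I with hs₂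
  have h0 : f s₂ = 0 := by rw [hfact, sub_self, mul_zero, zero_mul]
  have hm1' : m1 s₂ = ((ρ1 * kR - r1 : ℝ) : ℂ) + ((ρ1 * kI : ℝ) : ℂ) * Complex.I := by
    rw [hm1]; push_cast; ring
  have hm2' : m2 s₂ = ((ρ2 * kR - r2 : ℝ) : ℂ) + ((ρ2 * kI : ℝ) : ℂ) * Complex.I := by
    rw [hm2]; push_cast; ring
  have hm3' : m3 s₂ = ((ρ3 * kR - r3 : ℝ) : ℂ) + ((ρ3 * kI : ℝ) : ℂ) * Complex.I := by
    rw [hm3]; push_cast; ring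
  set Cb : ℂ := (((ρ1 * kR - r1 : ℝ) : ℂ) - ((ρ1 * kI : ℝ) : ℂ) * Complex.I) *
      ((((ρ2 * kR - r2 : ℝ) : ℂ) - ((ρ2 * kI : ℝ) : ℂ) * Complex.I) *
        (((ρ3 * kR - r3 : ℝ) : ℂ) - ((ρ3 * kI : ℝ) : ℂ) * Complex.I)) with hCb
  have hzero : (f s₂ * Cb).im = 0 := by rw [h0, zero_mul, Complex.zero_im]
  have hval : (f s₂ * Cb).im = kI *
      (ρ1 * R1 * v1 ^ 2 * (((ρ2 * kR - r2) ^ 2 + (ρ2 * kI) ^ 2) * ((ρ3 * kR - r3) ^ 2 + (ρ3 * kI) ^ 2))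
        + ρ2 * R2 * v2 ^ 2 * (((ρ1 * kR - r1) ^ 2 + (ρ1 * kI) ^ 2) * ((ρ3 * kR - r3) ^ 2 + (ρ3 * kI) ^ 2))
        + ρ3 * R3 * v3 ^ 2 * (((ρ1 * kR - r1) ^ 2 + (ρ1 * kI) ^ 2) * ((ρ2 * kR - r2) ^ 2 + (ρ2 * kI) ^ 2))
        + S12 * (v1 ^ 2 * v2 ^ 2) * (((ρ3 * kR - r3) ^ 2 + (ρ3 * kI) ^ 2) * ((ρ1 * kR - r1) * ρ2 + (ρ2 * kR - r2) * ρ1))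
        + S13 * (v1 ^ 2 * v3 ^ 2) * (((ρ2 * kR - r2) ^ 2 + (ρ2 * kI) ^ 2) * ((ρ1 * kR - r1) * ρ3 + (ρ3 * kR - r3) * ρ1))
        + S23 * (v2 ^ 2 * v3 ^ 2) * (((ρ1 * kR - r1) ^ 2 + (ρ1 * kI) ^ 2) * ((ρ2 * kR - r2) * ρ3 + (ρ3 * kR - r3) * ρ2))) := by
    rw [hfdef, hm1', hm2', hm3', hCb]
    simp only [← Complex.ofReal_pow]
    simp only [Complex.mul_im, Complex.mul_re, Complex.add_im, Complex.add_re,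
      Complex.sub_im, Complex.sub_re, Complex.ofReal_re, Complex.ofReal_im,
      Complex.I_re, Complex.I_im]
    ring
  have hP : 0 < (ρ1 * R1 * v1 ^ 2 * (((ρ2 * kR - r2) ^ 2 + (ρ2 * kI) ^ 2) * ((ρ3 * kR - r3) ^ 2 + (ρ3 * kI) ^ 2))
        + ρ2 * R2 * v2 ^ 2 * (((ρ1 * kR - r1) ^ 2 + (ρ1 * kI) ^ 2) * ((ρ3 * kR - r3) ^ 2 + (ρ3 * kI) ^ 2))
        + ρ3 * R3 * v3 ^ 2 * (((ρ1 * kR - r1) ^ 2 + (ρ1 * kI) ^ 2) * ((ρ2 * kR - r2) ^ 2 + (ρ2 * kI) ^ 2))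
        + S12 * (v1 ^ 2 * v2 ^ 2) * (((ρ3 * kR - r3) ^ 2 + (ρ3 * kI) ^ 2) * ((ρ1 * kR - r1) * ρ2 + (ρ2 * kR - r2) * ρ1))
        + S13 * (v1 ^ 2 * v3 ^ 2) * (((ρ2 * kR - r2) ^ 2 + (ρ2 * kI) ^ 2) * ((ρ1 * kR - r1) * ρ3 + (ρ3 * kR - r3) * ρ1))
        + S23 * (v2 ^ 2 * v3 ^ 2) * (((ρ1 * kR - r1) ^ 2 + (ρ1 * kI) ^ 2) * ((ρ2 * kR - r2) * ρ3 + (ρ3 * kR - r3) * ρ2))) := by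
    have hN1 : 0 < (ρ1 * kR - r1) ^ 2 + (ρ1 * kI) ^ 2 :=
      add_pos_of_pos_of_nonneg (pow_pos hA1 2) (sq_nonneg _)
    have hN2 : 0 < (ρ2 * kR - r2) ^ 2 + (ρ2 * kI) ^ 2 :=
      add_pos_of_pos_of_nonneg (pow_pos hA2 2) (sq_nonneg _)
    have hN3 : 0 < (ρ3 * kR - r3) ^ 2 + (ρ3 * kI) ^ 2 :=
      add_pos_of_pos_of_nonneg (pow_pos hA3 2) (sq_nonneg _)
    have hv1' : 0 < v1 ^ 2 := (sq_nonneg v1).lt_of_ne' (pow_ne_zero 2 hv1)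
    have hv2' : 0 < v2 ^ 2 := (sq_nonneg v2).lt_of_ne' (pow_ne_zero 2 hv2)
    have hv3' : 0 < v3 ^ 2 := (sq_nonneg v3).lt_of_ne' (pow_ne_zero 2 hv3)
    have t1 : 0 < ρ1 * R1 * v1 ^ 2 * (((ρ2 * kR - r2) ^ 2 + (ρ2 * kI) ^ 2) * ((ρ3 * kR - r3) ^ 2 + (ρ3 * kI) ^ 2)) :=
      mul_pos (mul_pos (mul_pos hρ1 hR1) hv1') (mul_pos hN2 hN3)
    have t2 : 0 < ρ2 * R2 * v2 ^ 2 * (((ρ1 * kR - r1) ^ 2 + (ρ1 * kI) ^ 2) * ((ρ3 * kR - r3) ^ 2 + (ρ3 * kI) ^ 2)) :=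
      mul_pos (mul_pos (mul_pos hρ2 hR2) hv2') (mul_pos hN1 hN3)
    have t3 : 0 < ρ3 * R3 * v3 ^ 2 * (((ρ1 * kR - r1) ^ 2 + (ρ1 * kI) ^ 2) * ((ρ2 * kR - r2) ^ 2 + (ρ2 * kI) ^ 2)) :=
      mul_pos (mul_pos (mul_pos hρ3 hR3) hv3') (mul_pos hN1 hN2)
    have t12 : 0 ≤ S12 * (v1 ^ 2 * v2 ^ 2) * (((ρ3 * kR - r3) ^ 2 + (ρ3 * kI) ^ 2) * ((ρ1 * kR - r1) * ρ2 + (ρ2 * kR - r2) * ρ1)) := by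
      apply mul_nonneg (mul_nonneg hS12 (by positivity))
      have : 0 < (ρ1 * kR - r1) * ρ2 + (ρ2 * kR - r2) * ρ1 := by
        have := mul_pos hA1 hρ2; have := mul_pos hA2 hρ1; linarith
      exact le_of_lt (mul_pos hN3 this)
    have t13 : 0 ≤ S13 * (v1 ^ 2 * v3 ^ 2) * (((ρ2 * kR - r2) ^ 2 + (ρ2 * kI) ^ 2) * ((ρ1 * kR - r1) * ρ3 + (ρ3 * kR - r3) * ρ1)) := by
      apply mul_nonneg (mul_nonneg hS13 (by positivity))
      have : 0 < (ρ1 * kR - r1) * ρ3 + (ρ3 * kR - r3) * ρ1 := by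
        have := mul_pos hA1 hρ3; have := mul_pos hA3 hρ1; linarith
      exact le_of_lt (mul_pos hN2 this)
    have t23 : 0 ≤ S23 * (v2 ^ 2 * v3 ^ 2) * (((ρ1 * kR - r1) ^ 2 + (ρ1 * kI) ^ 2) * ((ρ2 * kR - r2) * ρ3 + (ρ3 * kR - r3) * ρ2)) := by
      apply mul_nonneg (mul_nonneg hS23 (by positivity))
      have : 0 < (ρ2 * kR - r2) * ρ3 + (ρ3 * kR - r3) * ρ2 := by
        have := mul_pos hA2 hρ3; have := mul_pos hA3 hρ2; linarith
      exact le_of_lt (mul_pos hN1 this)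
    linarith
  rw [hzero] at *
  exact absurd hval.symm (mul_ne_zero hkI (ne_of_gt hP))
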